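/- If H₀, H₁, …, Hₙ are smooth functions on a symplectic manifold, then the density ρ_∞ = e^{−βH₀} satisfies {ρ_∞, H₀} + (β/2) Σ_i {ρ_∞ {H₀, H_i}, H_i} + (1/2) Σ_i {{ρ_∞, H_i}, H_i} = 0; hence the Gibbs density is a stationary solution of the Fokker–Planck equation of the stochastic Hamiltonian system with double-bracket dissipation. -/
import Mathlib


/-- Let `{·,·}` be a Poisson bracket (bilinear, antisymmetric,
satisfying the Jacobi identity and the Leibniz rule) on the commutative algebra of
smooth functions on a symplectic manifold, let `H₀, H₁, …, Hₙ` be functions, `β > 0`,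
and let `ρ∞ = e^{−βH₀}`, characterised by the chain rule
`{ρ∞, F} = −β ρ∞ {H₀, F}`.  Then
`{ρ∞,H₀} + (β/2) Σᵢ {ρ∞{H₀,Hᵢ}, Hᵢ} + (1/2) Σᵢ {{ρ∞,Hᵢ}, Hᵢ} = 0`:
the Gibbs density is a stationary solution of the Fokker–Planck equation of the
stochastic Hamiltonian system with double-bracket dissipation. -/
theorem gibbs_density_stationary_double_bracket
    {A : Type*} [CommRing A] [Algebra ℝ A]
    (P : A →ₗ[ℝ] A →ₗ[ℝ] A)
    (h_anti : ∀ F G : A, P F G = - P G F)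
    (h_leibniz : ∀ F G H : A, P (F * G) H = F * P G H + G * P F H)
    (h_jacobi : ∀ F G H : A, P F (P G H) + P G (P H F) + P H (P F G) = 0)
    (β : ℝ) (hβ : 0 < β) {n : ℕ} (H0 : A) (Hs : Fin n → A) (ρ : A)
    (hchain : ∀ F : A, P ρ F = (-β) • (ρ * P H0 F)) :
    P ρ H0 + (β / 2) • (∑ i, P (ρ * P H0 (Hs i)) (Hs i))
        + (1/2 : ℝ) • (∑ i, P (P ρ (Hs i)) (Hs i)) = 0 := by
  have hPH0 : P H0 H0 = 0 := by
    have h := h_anti H0 H0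
    have h2 : (2:ℝ) • P H0 H0 = 0 := by
      rw [two_smul]; nth_rewrite 1 [h]; abel
    have := congrArg (fun x => (1/2:ℝ) • x) h2
    simpa [smul_smul] using this
  have h1 : P ρ H0 = 0 := by rw [hchain, hPH0, mul_zero, smul_zero]
  have h2 : ∀ i, P (P ρ (Hs i)) (Hs i) = (-β) • P (ρ * P H0 (Hs i)) (Hs i) := by
    intro i
    rw [hchain (Hs i), map_smul, LinearMap.smul_apply]
  rw [h1, zero_add]
  rw [Finset.sum_congr rfl (fun i _ => h2 i), ← Finset.smul_sum,
    smul_smul, ← add_smul]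
  have hc : β / 2 + 1 / 2 * -β = 0 := by ring
  rw [hc, zero_smul]
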